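/- arXiv:1003.3379 — 2 statements merged into one kernel-verified Lean document; each statement's English description precedes it below -/
import Mathlib

section
/- Let A and B be Banach algebras, let T : A → B be a bounded linear surjective map, and define the bounded bilinear map m : A × B → B by m(a,b) = T(a)b (product taken in B). Then B is Arens regular if and only if m is Arens regular. -/
open Filter Topology ContinuousLinearMap NormedSpace

set_option maxSynthPendingDepth 2

noncomputable section

variable {X Y Z W E F : Type*}
  [NormedAddCommGroup X] [NormedSpace ℂ X]
  [NormedAddCommGroup Y] [NormedSpace ℂ Y]
  [NormedAddCommGroup Z] [NormedSpace ℂ Z]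
  [NormedAddCommGroup E] [NormedSpace ℂ E]
  [NormedAddCommGroup F] [NormedSpace ℂ F]

/-- The (first) Arens adjoint `m* : Z* × X → Y*` of a bounded bilinear map
`m : X × Y → Z`, characterized by `⟨m*(z',x), y⟩ = ⟨z', m(x,y)⟩`. -/
noncomputable def arensAdj (m : X →L[ℂ] Y →L[ℂ] Z) :
    StrongDual ℂ Z →L[ℂ] X →L[ℂ] StrongDual ℂ Y :=
  ((ContinuousLinearMap.compL ℂ Y Z ℂ).flip.comp m).flip

/-- The Arens triple adjoint `m*** : X** × Y** → Z**`. -/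
noncomputable def arensExt (m : X →L[ℂ] Y →L[ℂ] Z) :
    StrongDual ℂ (StrongDual ℂ X) →L[ℂ] StrongDual ℂ (StrongDual ℂ Y) →L[ℂ] StrongDual ℂ (StrongDual ℂ Z) :=
  arensAdj (arensAdj (arensAdj m))

/-- A map between dual spaces is weak*-weak* continuous. -/
def IsWeakStarCont (f : StrongDual ℂ E → StrongDual ℂ F) : Prop :=
  Continuous fun x : WeakDual ℂ E =>
    StrongDual.toWeakDual (f (WeakDual.toStrongDual x))

/-- First topological center of a bounded bilinear map. -/
def arensZ1 (m : X →L[ℂ] Y →L[ℂ] Z) : Set (StrongDual ℂ (StrongDual ℂ X)) :=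
  {x'' | IsWeakStarCont fun y'' => arensExt m x'' y''}

/-- Second topological center of a bounded bilinear map. -/
def arensZ2 (m : X →L[ℂ] Y →L[ℂ] Z) : Set (StrongDual ℂ (StrongDual ℂ Y)) :=
  {y'' | IsWeakStarCont fun x'' => arensExt m.flip y'' x''}

/-- `m` is Arens regular when `m*** = m^{t***t}`. -/
def ArensRegular (m : X →L[ℂ] Y →L[ℂ] Z) : Prop :=
  arensExt m = (arensExt m.flip).flip

/-- `m` is left strongly Arens irregular when `Z₁(m)` is the canonical image of `X`. -/
def LeftStronglyArensIrregular (m : X →L[ℂ] Y →L[ℂ] Z) : Prop :=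
  arensZ1 m = Set.range (NormedSpace.inclusionInDoubleDual ℂ X)

/-- `m` is right strongly Arens irregular when `Z₂(m)` is the canonical image of `Y`. -/
def RightStronglyArensIrregular (m : X →L[ℂ] Y →L[ℂ] Z) : Prop :=
  arensZ2 m = Set.range (NormedSpace.inclusionInDoubleDual ℂ Y)

/-- The adjoint `T* : F* → E*` of a bounded linear map. -/
noncomputable def dualMap' (T : E →L[ℂ] F) : StrongDual ℂ F →L[ℂ] StrongDual ℂ E :=
  (ContinuousLinearMap.compL ℂ E F ℂ).flip T

/-- The second adjoint `T** : E** → F**` of a bounded linear map. -/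
noncomputable def bidualMap (T : E →L[ℂ] F) :
    StrongDual ℂ (StrongDual ℂ E) →L[ℂ] StrongDual ℂ (StrongDual ℂ F) :=
  dualMap' (dualMap' T)

/-- A net in `A`: a function from a nonempty directed preorder to `A`. -/
structure Net (A : Type*) where
  ι : Type
  [pre : Preorder ι]
  [dir : IsDirected ι (· ≤ ·)]
  [ne : Nonempty ι]
  e : ι → A

attribute [instance] Net.pre Net.dir Net.ne

/-- A bounded approximate identity for a (non-unital) Banach algebra. -/
def IsBAI {A : Type*} [NonUnitalNormedRing A] (N : Net A) : Prop :=
  (∃ C : ℝ, ∀ i, ‖N.e i‖ ≤ C) ∧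
  (∀ a : A, Tendsto (fun i => N.e i * a) atTop (𝓝 a)) ∧
  (∀ a : A, Tendsto (fun i => a * N.e i) atTop (𝓝 a))

end



noncomputable section AuxProofs

variable {X₀ Y₀ Z₀ E₀ : Type*}
  [NormedAddCommGroup X₀] [NormedSpace ℂ X₀]
  [NormedAddCommGroup Y₀] [NormedSpace ℂ Y₀]
  [NormedAddCommGroup Z₀] [NormedSpace ℂ Z₀]
  [NormedAddCommGroup E₀] [NormedSpace ℂ E₀]

lemma bidualMap_surjective [CompleteSpace X₀] [CompleteSpace Y₀]
    (T : X₀ →L[ℂ] Y₀) (hT : Function.Surjective T) :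
    Function.Surjective (bidualMap T) := by
  obtain ⟨C, hC0, hC⟩ := T.exists_preimage_norm_le hT
  have hbb : ∀ f : StrongDual ℂ Y₀, ‖f‖ ≤ C * ‖dualMap' T f‖ := by
    intro f
    refine f.opNorm_le_bound (by positivity) fun y => ?_
    obtain ⟨x, hx, hxn⟩ := hC y
    have h1 : f y = dualMap' T f x := by simp [dualMap', hx]
    rw [h1]
    calc ‖dualMap' T f x‖ ≤ ‖dualMap' T f‖ * ‖x‖ := (dualMap' T f).le_opNorm x
      _ ≤ ‖dualMap' T f‖ * (C * ‖y‖) := by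
          exact mul_le_mul_of_nonneg_left hxn (norm_nonneg _)
      _ = C * ‖dualMap' T f‖ * ‖y‖ := by ring
  have hinj : Function.Injective (dualMap' T) := by
    intro f g hfg
    have := hbb (f - g)
    rw [map_sub, hfg, sub_self, norm_zero, mul_zero] at this
    exact sub_eq_zero.mp (norm_le_zero_iff.mp this)
  intro ξ
  set p : Submodule ℂ (StrongDual ℂ X₀) :=
    LinearMap.range ((dualMap' T) : StrongDual ℂ Y₀ →ₗ[ℂ] StrongDual ℂ X₀) with hp
  let e : StrongDual ℂ Y₀ ≃ₗ[ℂ] p :=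
    LinearEquiv.ofInjective ((dualMap' T) : StrongDual ℂ Y₀ →ₗ[ℂ] StrongDual ℂ X₀) hinj
  let g₀ : p →ₗ[ℂ] ℂ := ξ.toLinearMap ∘ₗ e.symm.toLinearMap
  have hbound : ∀ x : p, ‖g₀ x‖ ≤ (‖ξ‖ * C) * ‖x‖ := by
    intro x
    have hx : ((dualMap' T) (e.symm x) : StrongDual ℂ X₀) = (x : StrongDual ℂ X₀) := by
      have h := congrArg Subtype.val (e.apply_symm_apply x)
      rw [← h]
      rfl
    have : ‖e.symm x‖ ≤ C * ‖(x : StrongDual ℂ X₀)‖ := by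
      simpa [hx] using hbb (e.symm x)
    calc ‖g₀ x‖ = ‖ξ (e.symm x)‖ := rfl
      _ ≤ ‖ξ‖ * ‖e.symm x‖ := ξ.le_opNorm _
      _ ≤ ‖ξ‖ * (C * ‖(x : StrongDual ℂ X₀)‖) := mul_le_mul_of_nonneg_left this (norm_nonneg _)
      _ = (‖ξ‖ * C) * ‖x‖ := by rw [← mul_assoc]; rfl
  let g : p →L[ℂ] ℂ := LinearMap.mkContinuous g₀ (‖ξ‖ * C) hbound
  obtain ⟨η, hη, -⟩ := exists_extension_norm_eq p g
  refine ⟨η, ?_⟩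
  ext f
  have hmem : dualMap' T f ∈ p := LinearMap.mem_range_self _ f
  have h2 : bidualMap T η f = η (dualMap' T f) := rfl
  rw [h2]
  have h3 : η (dualMap' T f) = g ⟨dualMap' T f, hmem⟩ := hη ⟨dualMap' T f, hmem⟩
  rw [h3]
  have h4 : (⟨dualMap' T f, hmem⟩ : p) = e f := rfl
  show g₀ _ = _
  rw [h4]
  show ξ.toLinearMap (e.symm (e f)) = ξ f
  rw [e.symm_apply_apply]
  rfl

/-- `(n ∘ T)*** (x'', y'') = n*** (T** x'', y'')`. -/
lemma arensExt_comp (n : E₀ →L[ℂ] Y₀ →L[ℂ] Z₀) (T : X₀ →L[ℂ] E₀)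
    (x'' : StrongDual ℂ (StrongDual ℂ X₀)) (y'' : StrongDual ℂ (StrongDual ℂ Y₀)) :
    arensExt (n.comp T) x'' y'' = arensExt n (bidualMap T x'') y'' := rfl

/-- `(n ∘ T)^{t***} (y'', x'') = n^{t***} (y'', T** x'')`. -/
lemma arensExt_flip_comp (n : E₀ →L[ℂ] Y₀ →L[ℂ] Z₀) (T : X₀ →L[ℂ] E₀)
    (x'' : StrongDual ℂ (StrongDual ℂ X₀)) (y'' : StrongDual ℂ (StrongDual ℂ Y₀)) :
    arensExt (n.comp T).flip y'' x'' = arensExt n.flip y'' (bidualMap T x'') := rfl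

end AuxProofs

/-- For surjective `T`, `B` is Arens regular iff `m(a,b) = T(a)b` is. -/
theorem stmt_1 {A B : Type*} [NonUnitalNormedRing A] [NormedSpace ℂ A] [IsScalarTower ℂ A A] [SMulCommClass ℂ A A] [CompleteSpace A] [NonUnitalNormedRing B] [NormedSpace ℂ B] [IsScalarTower ℂ B B] [SMulCommClass ℂ B B] [CompleteSpace B]
    (T : A →L[ℂ] B) (hT : Function.Surjective T) :
    ArensRegular (ContinuousLinearMap.mul ℂ B) ↔
      ArensRegular ((ContinuousLinearMap.mul ℂ B).comp T) := by
  constructor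
  · intro h
    apply ContinuousLinearMap.ext; intro x''
    apply ContinuousLinearMap.ext; intro y''
    exact DFunLike.congr_fun (DFunLike.congr_fun h (bidualMap T x'')) y''
  · intro h
    apply ContinuousLinearMap.ext; intro a''
    apply ContinuousLinearMap.ext; intro b''
    obtain ⟨x'', rfl⟩ := bidualMap_surjective T hT a''
    exact DFunLike.congr_fun (DFunLike.congr_fun h x'') b''
end

section
/- Let A and B be Banach algebras and let T : A → B be a bounded algebra homomorphism which is weakly compact (the image of the closed unit ball of A under T is relatively weakly compact in B). Then the bounded bilinear map m : A × A → B defined by m(a₁,a₂) = T(a₁a₂) is Arens regular. -/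
open Filter Topology ContinuousLinearMap NormedSpace

section Aux

lemma weakDual_dual_eval' {E : Type*} [NormedAddCommGroup E] [NormedSpace ℂ E]
    (f : WeakDual ℂ E →L[ℂ] ℂ) : ∃ y : E, ∀ Φ : WeakDual ℂ E, f Φ = Φ y := by
  have hb := LinearMap.hasBasis_weakBilin (topDualPairing ℂ E)
  have hmem : f ⁻¹' Metric.ball 0 1 ∈ 𝓝 (0 : WeakDual ℂ E) :=
    (Metric.isOpen_ball.preimage f.continuous).mem_nhds (by simp)
  replace hmem := hb.mem_iff.mp hmem
  obtain ⟨U, hU, hUsub⟩ := hmem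
  obtain ⟨s, r, hr, rfl⟩ := (SeminormFamily.basisSets_iff _).mp hU
  set p := (topDualPairing ℂ E).toSeminormFamily with hp
  -- the evaluation functionals
  let L : s → (WeakDual ℂ E →ₗ[ℂ] ℂ) := fun i =>
    { toFun := fun Φ => Φ (i : E)
      map_add' := fun _ _ => rfl
      map_smul' := fun _ _ => rfl }
  have hker : (⨅ i, LinearMap.ker (L i)) ≤ LinearMap.ker (f : WeakDual ℂ E →ₗ[ℂ] ℂ) := by
    intro Φ hΦ
    simp only [Submodule.mem_iInf, LinearMap.mem_ker] at hΦ ⊢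
    have hzero : ∀ c : ℂ, (c • Φ) ∈ (s.sup p).ball 0 r := by
      intro c
      refine (Seminorm.mem_ball_zero _).2 ?_
      refine Seminorm.finset_sup_apply_lt hr fun i hi => ?_
      have h0 : Φ (i : E) = 0 := hΦ ⟨i, hi⟩
      refine lt_of_eq_of_lt (b := ‖c * Φ (i : E)‖) rfl ?_
      rw [h0, mul_zero, norm_zero]; exact hr
    by_contra hne
    obtain ⟨n, hn⟩ := exists_nat_gt (1 / ‖f Φ‖)
    have hfn : f ((n : ℂ) • Φ) ∈ Metric.ball 0 1 := hUsub (hzero n)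
    simp only [Set.mem_preimage, Metric.mem_ball, dist_zero_right, map_smul] at hfn
    rw [norm_smul] at hfn
    have hpos : 0 < ‖f Φ‖ := norm_pos_iff.mpr hne
    have : (1:ℝ) / ‖f Φ‖ * ‖f Φ‖ < (n : ℝ) * ‖f Φ‖ := by
      exact mul_lt_mul_of_pos_right hn hpos
    rw [one_div_mul_cancel hpos.ne'] at this
    simp only [Complex.norm_natCast] at hfn
    linarith
  have hspan := mem_span_of_iInf_ker_le_ker hker
  rw [Submodule.mem_span_range_iff_exists_fun] at hspan
  obtain ⟨c, hc⟩ := hspan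
  refine ⟨∑ i, c i • (i : E), fun Φ => ?_⟩
  have h1 := congrFun (congrArg (fun (g : WeakDual ℂ E →ₗ[ℂ] ℂ) => (g : WeakDual ℂ E → ℂ)) hc) Φ
  simp only [LinearMap.coe_sum, Finset.sum_apply, LinearMap.smul_apply] at h1
  have h2 : f Φ = ∑ x : s, c x • (L x) Φ := h1.symm
  rw [h2]
  have h3 : Φ (∑ i : s, c i • (i : E)) = ∑ i : s, c i * Φ (i : E) := by
    rw [map_sum]
    congr 1
    ext i
    rw [map_smul]
    rfl
  rw [h3]
  rfl

set_option maxHeartbeats 1000000 in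
set_option maxSynthPendingDepth 2 in
lemma gantmacher {A B : Type*} [NormedAddCommGroup A] [NormedSpace ℂ A]
    [NormedAddCommGroup B] [NormedSpace ℂ B] (T : A →L[ℂ] B)
    (hwc : IsCompact (closure (toWeakSpace ℂ B '' (T '' Metric.closedBall (0 : A) 1))))
    (F : StrongDual ℂ (StrongDual ℂ A)) :
    ∃ c : B, bidualMap T F = inclusionInDoubleDual ℂ B c := by
  classical
  letI : ContinuousSMul ℂ (WeakSpace ℂ B) := WeakBilin.instContinuousSMul (topDualPairing ℂ B).flip
  letI : ContinuousSMul ℝ (WeakSpace ℂ B) := IsScalarTower.continuousSMul ℂ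
  letI : IsScalarTower ℝ ℂ (WeakDual ℂ (StrongDual ℂ B)) := ContinuousLinearMap.isScalarTower
  letI : LocallyConvexSpace ℝ (WeakDual ℂ (StrongDual ℂ B)) :=
    by exact (WeakBilin.locallyConvexSpace (𝕜 := ℂ) (E := StrongDual ℂ (StrongDual ℂ B)) (F := StrongDual ℂ B) (B := topDualPairing ℂ (StrongDual ℂ B)) :)
  set K := closure (toWeakSpace ℂ B '' (T '' Metric.closedBall (0 : A) 1)) with hK
  let jL : WeakSpace ℂ B →ₗ[ℂ] WeakDual ℂ (StrongDual ℂ B) :=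
    (StrongDual.toWeakDual (𝕜 := ℂ) (E := StrongDual ℂ B)).toLinearMap.comp
      ((inclusionInDoubleDual ℂ B).toLinearMap.comp (toWeakSpace ℂ B).symm.toLinearMap)
  have hj : Continuous jL := by
    apply WeakBilin.continuous_of_continuous_eval
    intro g
    exact WeakBilin.eval_continuous ((topDualPairing ℂ B).flip) g
  have hKconv : Convex ℝ K := by
    have h1 : Convex ℝ (Metric.closedBall (0 : A) 1) := convex_closedBall _ _
    have h2 : Convex ℝ (T '' Metric.closedBall (0 : A) 1) := by
      have := h1.linear_image ((T.restrictScalars ℝ).toLinearMap)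
      simpa using this
    have h3 : Convex ℝ (toWeakSpace ℂ B '' (T '' Metric.closedBall (0 : A) 1)) := by
      have := h2.linear_image (((toWeakSpace ℂ B).restrictScalars ℝ).toLinearMap)
      simpa using this
    exact h3.closure
  set C := ⇑jL '' K with hC
  have hCcomp : IsCompact C := hwc.image hj
  have hCconv : Convex ℝ C := hKconv.linear_image (jL.restrictScalars ℝ)
  have hC0 : (0 : WeakDual ℂ (StrongDual ℂ B)) ∈ C := by
    refine ⟨toWeakSpace ℂ B (T 0), subset_closure
      (Set.mem_image_of_mem _ (Set.mem_image_of_mem _ (Metric.mem_closedBall_self zero_le_one))),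
      by simp [map_zero]⟩
  have hmain : ∀ G : StrongDual ℂ (StrongDual ℂ A), ‖G‖ ≤ 1 →
      StrongDual.toWeakDual (bidualMap T G) ∈ C := by
    intro G hG
    by_contra hx
    have hCclosed : IsClosed C := hCcomp.isClosed
    obtain ⟨f, u, hfC, hfx⟩ := RCLike.geometric_hahn_banach_closed_point (𝕜 := ℂ)
      hCconv hCclosed hx
    obtain ⟨g, hg⟩ := weakDual_dual_eval' f
    have hu0 : 0 < u := by
      have := hfC 0 hC0
      simpa using this
    have hball : ∀ a : A, a ∈ Metric.closedBall (0 : A) 1 → ‖g (T a)‖ ≤ u := by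
      intro a ha
      rcases eq_or_ne (g (T a)) 0 with h | h
      · rw [h, norm_zero]; exact hu0.le
      · set z := g (T a) with hz
        set θ : ℂ := (‖z‖ : ℂ) / z with hθdef
        have hθnorm : ‖θ‖ = 1 := by
          rw [hθdef, norm_div, Complex.norm_real, norm_norm, div_self (norm_ne_zero_iff.mpr h)]
        have hmemball : θ • a ∈ Metric.closedBall (0 : A) 1 := by
          rw [Metric.mem_closedBall, dist_zero_right, norm_smul, hθnorm, one_mul]
          rwa [Metric.mem_closedBall, dist_zero_right] at ha
        have hmem : jL (toWeakSpace ℂ B (T (θ • a))) ∈ C :=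
          Set.mem_image_of_mem _ (subset_closure
            (Set.mem_image_of_mem _ (Set.mem_image_of_mem _ hmemball)))
        have h2 := hfC _ hmem
        have h3 : f (jL (toWeakSpace ℂ B (T (θ • a)))) = g (T (θ • a)) := by
          rw [hg]; rfl
        have h4 : g (T (θ • a)) = θ * z := by
          rw [map_smul, map_smul]; rfl
        have h5 : θ * z = (‖z‖ : ℂ) := by
          rw [hθdef, div_mul_cancel₀ _ h]
        rw [h3, h4, h5] at h2
        simpa using h2.le
    have hnorm : ‖dualMap' T g‖ ≤ u := by
      refine ContinuousLinearMap.opNorm_le_bound _ hu0.le fun x => ?_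
      have hfx' : (dualMap' T g) x = g (T x) := rfl
      rcases eq_or_ne x 0 with rfl | hx0
      · simp
      · have hxn : (0 : ℝ) < ‖x‖ := norm_pos_iff.mpr hx0
        have hmem : ((‖x‖ : ℂ)⁻¹ • x) ∈ Metric.closedBall (0 : A) 1 := by
          rw [Metric.mem_closedBall, dist_zero_right, norm_smul, norm_inv, Complex.norm_real,
            norm_norm, inv_mul_cancel₀ hxn.ne']
        have hb := hball _ hmem
        rw [map_smul, map_smul, norm_smul, norm_inv, Complex.norm_real, norm_norm] at hb
        rw [hfx']
        calc ‖g (T x)‖ = ‖x‖ * (‖x‖⁻¹ * ‖g (T x)‖) := by field_simp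
          _ ≤ ‖x‖ * u := mul_le_mul_of_nonneg_left hb (norm_nonneg x)
          _ = u * ‖x‖ := mul_comm _ _
    have h5 : f (StrongDual.toWeakDual (bidualMap T G)) = G (dualMap' T g) := by
      rw [hg]; rfl
    have h6 : ‖G (dualMap' T g)‖ ≤ u := by
      calc ‖G (dualMap' T g)‖ ≤ ‖G‖ * ‖dualMap' T g‖ := G.le_opNorm _
        _ ≤ 1 * u := mul_le_mul hG hnorm (norm_nonneg _) zero_le_one
        _ = u := one_mul u
    have h7 : RCLike.re (f (StrongDual.toWeakDual (bidualMap T G))) ≤ u := by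
      refine le_trans (RCLike.re_le_norm _) ?_
      rw [h5]; exact h6
    exact absurd h7 (not_le.mpr hfx)
  rcases eq_or_ne F 0 with rfl | hF0
  · exact ⟨0, by rw [map_zero, map_zero]⟩
  · have hr : (0 : ℝ) < ‖F‖ := by
      rcases (norm_nonneg F).lt_or_eq with h | h
      · exact h
      · exact absurd (ContinuousLinearMap.opNorm_zero_iff F |>.mp h.symm) hF0
    set rc : ℂ := (‖F‖ : ℂ) with hrc
    have hrc0 : rc ≠ 0 := by
      simp [hrc, hr.ne']
    have h1 : ‖rc⁻¹ • F‖ ≤ 1 := by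
      rw [norm_smul, norm_inv, hrc, Complex.norm_real, norm_norm, inv_mul_cancel₀ hr.ne']
    obtain ⟨y, hyK, hy⟩ := hmain (rc⁻¹ • F) h1
    refine ⟨rc • (toWeakSpace ℂ B).symm y, ?_⟩
    have h2 : bidualMap T (rc⁻¹ • F) =
        inclusionInDoubleDual ℂ B ((toWeakSpace ℂ B).symm y) := by
      apply (StrongDual.toWeakDual (𝕜 := ℂ) (E := StrongDual ℂ B)).injective
      rw [← hy]; rfl
    calc bidualMap T F = bidualMap T (rc • rc⁻¹ • F) := by
          rw [smul_inv_smul₀ hrc0]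
      _ = rc • bidualMap T (rc⁻¹ • F) := by rw [map_smul]
      _ = rc • inclusionInDoubleDual ℂ B ((toWeakSpace ℂ B).symm y) := by rw [h2]
      _ = inclusionInDoubleDual ℂ B (rc • (toWeakSpace ℂ B).symm y) := (map_smul _ _ _).symm

end Aux

set_option maxSynthPendingDepth 2 in
/-- If `T : A → B` is a weakly compact bounded algebra homomorphism,
then `m(a₁,a₂) = T(a₁a₂)` is Arens regular. -/
theorem stmt_9 {A B : Type*} [NonUnitalNormedRing A] [NormedSpace ℂ A] [IsScalarTower ℂ A A] [SMulCommClass ℂ A A] [CompleteSpace A] [NonUnitalNormedRing B] [NormedSpace ℂ B] [IsScalarTower ℂ B B] [SMulCommClass ℂ B B] [CompleteSpace B]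
    (T : A →L[ℂ] B)
    (hhom : ∀ a b : A, T (a * b) = T a * T b)
    (hwc : IsCompact (closure (toWeakSpace ℂ B '' (T '' Metric.closedBall (0 : A) 1)))) :
    ArensRegular
      ((ContinuousLinearMap.compL ℂ A A B T).comp (ContinuousLinearMap.mul ℂ A)) := by
  classical
  have key : ∀ (H : StrongDual ℂ (StrongDual ℂ A)) (c : B), bidualMap T H = inclusionInDoubleDual ℂ B c →
      ∀ φ : StrongDual ℂ B, H (dualMap' T φ) = φ c := by
    intro H c hc φ
    have h1 : bidualMap T H φ = inclusionInDoubleDual ℂ B c φ := by rw [hc]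
    rw [NormedSpace.dual_def] at h1
    exact h1
  set m := (ContinuousLinearMap.compL ℂ A A B T).comp (ContinuousLinearMap.mul ℂ A) with hm
  unfold ArensRegular
  refine ContinuousLinearMap.ext fun F => ContinuousLinearMap.ext fun G => ContinuousLinearMap.ext fun z' => ?_
  obtain ⟨cF, hcF⟩ := gantmacher T hwc F
  obtain ⟨cG, hcG⟩ := gantmacher T hwc G
  set U : B →L[ℂ] StrongDual ℂ B := arensAdj (ContinuousLinearMap.mul ℂ B) z' with hU
  set U' : B →L[ℂ] StrongDual ℂ B := arensAdj (ContinuousLinearMap.mul ℂ B).flip z' with hU'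
  have hL : (arensAdj (arensAdj m)) G z' = dualMap' T (U' cG) := by
    ext a
    have e2 : (arensAdj m) z' a = dualMap' T (U (T a)) := by
      ext b
      show z' (T (a * b)) = z' (T a * T b)
      rw [hhom]
    have e1 : (arensAdj (arensAdj m)) G z' a = G ((arensAdj m) z' a) := rfl
    rw [e1, e2]
    exact key G cG hcG (U (T a))
  have hR : (arensAdj (arensAdj m.flip)) F z' = dualMap' T (U cF) := by
    ext b
    have e2 : (arensAdj m.flip) z' b = dualMap' T (U' (T b)) := by
      ext a
      show z' (T (a * b)) = z' (T a * T b)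
      rw [hhom]
    have e1 : (arensAdj (arensAdj m.flip)) F z' b = F ((arensAdj m.flip) z' b) := rfl
    rw [e1, e2]
    exact key F cF hcF (U' (T b))
  calc arensExt m F G z' = F ((arensAdj (arensAdj m)) G z') := rfl
    _ = F (dualMap' T (U' cG)) := by rw [hL]
    _ = (U' cG) cF := key F cF hcF _
    _ = z' (cF * cG) := rfl
    _ = (U cF) cG := rfl
    _ = G (dualMap' T (U cF)) := (key G cG hcG _).symm
    _ = G ((arensAdj (arensAdj m.flip)) F z') := by rw [hR]
    _ = (arensExt m.flip).flip F G z' := rfl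
end
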